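/- For every real x > 0 one has x² ≤ (x + 2)(e^{−x} + x − 1); equivalently, with ψ(u) = e^u − u − 1, the function g(x) = x²/ψ(−x) satisfies g(x) ≤ x + 2 for all x > 0. -/
import Mathlib

lemma exp_neg_lb {y : ℝ} (h0 : 0 ≤ y) (h1 : y ≤ 1) :
    1 - y + y^2/2 - y^3/6 + y^4/24 - y^5/100 ≤ Real.exp (-y) := by
  have hb := Real.exp_bound (x := -y) (by rw [abs_neg, abs_of_nonneg h0]; exact h1) (n := 5) (by norm_num)
  rw [abs_neg, abs_of_nonneg h0] at hb
  have h' := (abs_sub_le_iff.1 hb).2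
  simp [Finset.sum_range_succ, Nat.factorial] at h'
  nlinarith [h']

lemma poly_q_nonneg {t : ℝ} (h0 : 0 ≤ t) (h1 : t ≤ 1) :
    0 ≤ 1 - t + t^2/2 - t^3/6 + t^4/24 - t^5/100 := by
  have ht32 : t^3 ≤ t^2 := pow_le_pow_of_le_one h0 h1 (by norm_num)
  have ht54 : t^5 ≤ t^4 := pow_le_pow_of_le_one h0 h1 (by norm_num)
  nlinarith [sq_nonneg (1-t), pow_nonneg h0 4]

lemma poly_mid {t : ℝ} (h0 : 0 ≤ t) (h1 : t ≤ 1) :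
    0 ≤ (t + 3) * (0.3678 * (1 - t + t^2/2 - t^3/6 + t^4/24 - t^5/100)) + t - 1 := by
  have hb4 : t^4 ≤ 1 := pow_le_one₀ h0 h1
  have hb6 : t^6 ≤ 1 := pow_le_one₀ h0 h1
  nlinarith [pow_nonneg h0 2, pow_nonneg h0 3, pow_nonneg h0 4,
    pow_nonneg h0 5, pow_nonneg h0 6, hb4, hb6, h0]

/-- for `x > 0`, `x² ≤ (x+2)(e^{−x} + x − 1)`, i.e.
`g(x) = x²/ψ(−x) ≤ x + 2`. -/
theorem sq_le_add_two_mul_psi_neg (x : ℝ) (hx : 0 < x) :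
    x ^ 2 ≤ (x + 2) * (Real.exp (-x) + x - 1) := by
  have key : 0 ≤ (x + 2) * Real.exp (-x) + x - 2 := by
    rcases le_or_gt x 1 with h1 | h1
    · have hlb := exp_neg_lb hx.le h1
      have hmul := mul_le_mul_of_nonneg_left hlb (by linarith : (0:ℝ) ≤ x + 2)
      have p3 : 0 ≤ x^3 * (1/6 - x/12) :=
        mul_nonneg (by positivity) (by linarith)
      have p5 : 0 ≤ x^5 * ((13 - 6*x)/600) :=
        mul_nonneg (by positivity) (by linarith)
      nlinarith [hmul, p3, p5]
    · rcases le_or_gt 2 x with h2 | h2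
      · have := Real.exp_pos (-x)
        nlinarith
      · have ht0 : 0 ≤ x - 1 := by linarith
        have ht1 : x - 1 ≤ 1 := by linarith
        have hq := exp_neg_lb ht0 ht1
        have hq0 := poly_q_nonneg ht0 ht1
        have hmid := poly_mid ht0 ht1
        have he : Real.exp (-x) = Real.exp (-1) * Real.exp (-(x-1)) := by
          rw [← Real.exp_add]; ring_nf
        have hE : Real.exp 1 < 2.7182818286 := Real.exp_one_lt_d9
        have hE' : (0.3678 : ℝ) ≤ Real.exp (-1) := by
          rw [Real.exp_neg, ← one_div, le_div_iff₀ (Real.exp_pos 1)]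
          nlinarith [hE]
        have h3 : ((x-1) + 3) * (0.3678 * (1 - (x-1) + (x-1)^2/2 - (x-1)^3/6 + (x-1)^4/24 - (x-1)^5/100))
            ≤ (x + 2) * Real.exp (-x) := by
          rw [he]
          have hle : (0.3678:ℝ) * (1 - (x-1) + (x-1)^2/2 - (x-1)^3/6 + (x-1)^4/24 - (x-1)^5/100)
              ≤ Real.exp (-1) * Real.exp (-(x-1)) :=
            mul_le_mul hE' hq hq0 (Real.exp_pos _).le
          nlinarith [hle, ht0]
        linarith [h3, hmid]
  nlinarith [key]
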